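/- (Chernoff's estimate) Let H be a real Hilbert space, T : H → H nonexpansive (‖Tx − Ty‖ ≤ ‖x − y‖ for all x, y), λ > 0, and let v : [0, ∞) → H be differentiable with v′(t) = −(1/λ)(v(t) − T(v(t))) for all t ≥ 0 and v(0) = v₀. Then for every n ∈ ℕ and t ≥ 0: ‖v(t) − T^[n](v₀)‖ ≤ (1/λ)‖v₀ − T(v₀)‖ · √(λt + (nλ − t)²), where T^[n] denotes the n-th iterate of T. -/

import Mathlib

open Set

set_option maxHeartbeats 2000000 in
/-- Chernoff's estimate: if `T` is nonexpansive on a real Hilbert space and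
`v` solves `v′ = −(1/λ)(I − T)v` with `v(0) = v₀`, then for every `n` and `t ≥ 0`,
`‖v(t) − Tⁿv₀‖ ≤ (1/λ)‖v₀ − Tv₀‖ √(λt + (nλ − t)²)`. -/
theorem stmt8 {H : Type*} [NormedAddCommGroup H] [InnerProductSpace ℝ H] [CompleteSpace H]
    (T : H → H) (hT : ∀ x y : H, ‖T x - T y‖ ≤ ‖x - y‖)
    (lam : ℝ) (hlam : 0 < lam)
    (v : ℝ → H) (v₀ : H) (hv₀ : v 0 = v₀)
    (hv : ∀ t : ℝ, 0 ≤ t → HasDerivAt v (-(1 / lam) • (v t - T (v t))) t) :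
    ∀ (n : ℕ) (t : ℝ), 0 ≤ t →
      ‖v t - T^[n] v₀‖ ≤
        (1 / lam) * ‖v₀ - T v₀‖ * Real.sqrt (lam * t + ((n : ℝ) * lam - t) ^ 2) := by
  set C : ℝ := (1 / lam) * ‖v₀ - T v₀‖ with hCdef
  have hC : (0:ℝ) ≤ C := mul_nonneg (by positivity) (norm_nonneg _)
  have hnorm : ‖v₀ - T v₀‖ = lam * C := by
    rw [hCdef]; field_simp
  -- iterates of T are nonexpansive
  have hTn : ∀ (m : ℕ) (x y : H), ‖T^[m] x - T^[m] y‖ ≤ ‖x - y‖ := by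
    intro m
    induction m with
    | zero => simp
    | succ k ih =>
      intro x y
      rw [Function.iterate_succ_apply', Function.iterate_succ_apply']
      exact (hT _ _).trans (ih x y)
  have hiter : ∀ m : ℕ, ‖v₀ - T^[m] v₀‖ ≤ (m : ℝ) * ‖v₀ - T v₀‖ := by
    intro m
    induction m with
    | zero => simp
    | succ k ih =>
      have h1 : ‖v₀ - T^[k+1] v₀‖ ≤ ‖v₀ - T^[k] v₀‖ + ‖T^[k] v₀ - T^[k+1] v₀‖ := by
        have := norm_sub_le (v₀ - T^[k] v₀) (T^[k+1] v₀ - T^[k] v₀)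
        simpa [sub_sub_eq_add_sub, norm_sub_rev] using
          norm_sub_le_norm_sub_add_norm_sub v₀ (T^[k] v₀) (T^[k+1] v₀)
      have h2 : ‖T^[k] v₀ - T^[k+1] v₀‖ ≤ ‖v₀ - T v₀‖ := by
        rw [Function.iterate_succ_apply]
        exact hTn k v₀ (T v₀)
      push_cast
      linarith
  -- derivative of the squared distance
  have hw : ∀ (c : H) (s : ℝ), 0 ≤ s →
      HasDerivAt (fun r => ‖v r - c‖ ^ 2)
        (2 * (inner ℝ (-(1 / lam) • (v s - T (v s))) (v s - c) : ℝ)) s := by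
    intro c s hs
    have h1 : HasDerivAt (fun r => v r - c) (-(1 / lam) • (v s - T (v s))) s :=
      (hv s hs).sub_const c
    have h2 := h1.inner ℝ h1
    have h3 : (fun r => ‖v r - c‖ ^ 2) = fun r => (inner ℝ (v r - c) (v r - c) : ℝ) := by
      funext r; rw [real_inner_self_eq_norm_sq]
    rw [h3]
    refine h2.congr_deriv ?_
    rw [real_inner_comm]; ring
  -- generic Gronwall-type comparison step
  have gron : ∀ (c : H) (m : ℕ) (t : ℝ), 0 ≤ t →
      ‖v 0 - c‖ ^ 2 ≤ C ^ 2 * ((m : ℝ) * lam) ^ 2 →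
      (∀ x ε : ℝ, 0 ≤ x → 0 < ε →
        ‖v x - c‖ ^ 2 = C ^ 2 * (lam * x + ((m : ℝ) * lam - x) ^ 2)
            + ε * Real.exp (2 / lam * x) →
        lam * (2 * (inner ℝ (-(1 / lam) • (v x - T (v x))) (v x - c) : ℝ)) <
          C ^ 2 * (lam * (lam - 2 * ((m : ℝ) * lam - x)))
            + 2 * (ε * Real.exp (2 / lam * x))) →
      ‖v t - c‖ ^ 2 ≤ C ^ 2 * (lam * t + ((m : ℝ) * lam - t) ^ 2) := by
    intro c m t ht h0 hbd
    have hK : (0:ℝ) < Real.exp (2 / lam * t) := Real.exp_pos _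
    refine le_of_forall_pos_le_add fun ε' hε' => ?_
    set ε : ℝ := ε' / Real.exp (2 / lam * t) with hεdef
    have hε : 0 < ε := div_pos hε' hK
    set F : ℝ → ℝ := fun x => C ^ 2 * (lam * x + ((m : ℝ) * lam - x) ^ 2)
        + ε * Real.exp (2 / lam * x) with hFdef
    set F' : ℝ → ℝ := fun x => C ^ 2 * (lam - 2 * ((m : ℝ) * lam - x))
        + ε * (Real.exp (2 / lam * x) * (2 / lam)) with hF'def
    have hB : ∀ x : ℝ, HasDerivAt F (F' x) x := by
      intro x
      have e1 : HasDerivAt (fun x : ℝ => lam * x + ((m : ℝ) * lam - x) ^ 2)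
          (lam * 1 + 2 * ((m : ℝ) * lam - x) ^ 1 * (0 - 1)) x :=
        ((hasDerivAt_id x).const_mul lam).add
          (((hasDerivAt_const x ((m : ℝ) * lam)).sub (hasDerivAt_id x)).pow 2)
      have e2 : HasDerivAt (fun x : ℝ => Real.exp (2 / lam * x))
          (Real.exp (2 / lam * x) * (2 / lam)) x := by
        simpa [mul_comm] using ((hasDerivAt_id x).const_mul (2 / lam)).exp
      have h3 := (e1.const_mul (C ^ 2)).add (e2.const_mul ε)
      have heq : F' x = C ^ 2 * (lam * 1 + 2 * ((m : ℝ) * lam - x) ^ 1 * (0 - 1))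
          + ε * (Real.exp (2 / lam * x) * (2 / lam)) := by
        simp only [hF'def]; ring
      rw [heq]
      exact h3
    have hmain := image_le_of_deriv_right_lt_deriv_boundary
      (f := fun x => ‖v x - c‖ ^ 2)
      (f' := fun x => 2 * (inner ℝ (-(1 / lam) • (v x - T (v x))) (v x - c) : ℝ))
      (a := 0) (b := t)
      (fun s hs => ((hw c s hs.1).continuousAt).continuousWithinAt)
      (fun x hx => (hw c x hx.1).hasDerivWithinAt)
      (by
        simp only [hFdef, mul_zero, Real.exp_zero, mul_one]
        nlinarith [h0])
      hB
      (by
        intro x hx hWB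
        have hstep := hbd x ε hx.1 hε hWB
        have : lam * (2 * (inner ℝ (-(1 / lam) • (v x - T (v x))) (v x - c) : ℝ)) <
            lam * F' x := by
          refine hstep.trans_le ?_
          simp only [hF'def]
          have : lam * (ε * (Real.exp (2 / lam * x) * (2 / lam)))
              = 2 * (ε * Real.exp (2 / lam * x)) := by
            field_simp
          nlinarith [this]
        exact lt_of_mul_lt_mul_left (by linarith) hlam.le)
    have := hmain (right_mem_Icc.2 ht)
    simp only [hFdef] at this
    have hεK : ε * Real.exp (2 / lam * t) = ε' := by
      rw [hεdef]; field_simp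
    linarith [this, hεK.le, hεK.ge]
  -- main squared estimate by induction
  have main : ∀ (m : ℕ) (t : ℝ), 0 ≤ t →
      ‖v t - T^[m] v₀‖ ^ 2 ≤ C ^ 2 * (lam * t + ((m : ℝ) * lam - t) ^ 2) := by
    intro m
    induction m with
    | zero =>
      intro t ht
      refine gron v₀ 0 t ht (by simp [hv₀]) ?_ |>.trans_eq (by norm_num)
      intro x ε hx hε hWB
      set u : H := v x - v₀ with hu
      set b : ℝ := ‖u‖ with hbdef
      have hb : 0 ≤ b := norm_nonneg _
      have hθ : 0 < ε * Real.exp (2 / lam * x) := by positivity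
      have hdecomp : (inner ℝ (v x - T (v x)) u : ℝ) = (inner ℝ u u : ℝ) - (inner ℝ (T (v x) - v₀) u : ℝ) := by
        have hrw : (v x - T (v x) : H) = u - (T (v x) - v₀) := by
          rw [hu]; abel
        rw [hrw, inner_sub_left]
      have hcs : (inner ℝ (T (v x) - v₀) u : ℝ) ≤ ‖T (v x) - v₀‖ * b := real_inner_le_norm _ _
      have hz : ‖T (v x) - v₀‖ ≤ b + lam * C := by
        calc ‖T (v x) - v₀‖ ≤ ‖T (v x) - T v₀‖ + ‖T v₀ - v₀‖ :=
              norm_sub_le_norm_sub_add_norm_sub _ _ _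
          _ ≤ ‖v x - v₀‖ + ‖v₀ - T v₀‖ := by
              gcongr; exacts [hT _ _, (norm_sub_rev _ _).le]
          _ = b + lam * C := by rw [hnorm, hbdef]
      have huu : (inner ℝ u u : ℝ) = b ^ 2 := by
        rw [real_inner_self_eq_norm_sq, hbdef]
      have hW' : lam * (2 * (inner ℝ (-(1 / lam) • (v x - T (v x))) u : ℝ))
          = -2 * (inner ℝ (v x - T (v x)) u : ℝ) := by
        rw [real_inner_smul_left]; field_simp
      have hinner_lb : (inner ℝ (v x - T (v x)) u : ℝ) ≥ b ^ 2 - (b + lam * C) * b := by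
        rw [hdecomp, huu]
        have : (inner ℝ (T (v x) - v₀) u : ℝ) ≤ (b + lam * C) * b :=
          hcs.trans (by nlinarith)
        linarith
      rw [hW']
      set θ : ℝ := ε * Real.exp (2 / lam * x) with hθdef
      have hb2 : b ^ 2 = C ^ 2 * (lam * x + x ^ 2) + θ := by
        have := hWB; push_cast at this; nlinarith [this]
      set R : ℝ := C ^ 2 * (lam * (lam + 2 * x)) + 2 * θ with hRdef
      have hR : 0 < R := by
        have : 0 ≤ C ^ 2 * (lam * (lam + 2 * x)) := by positivity
        simp only [hRdef]; linarith
      have hsq : (2 * lam * C * b) ^ 2 < R ^ 2 := by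
        simp only [hRdef]
        nlinarith [hb2, hθ, hx, sq_nonneg (C ^ 2 * lam ^ 2), hC, hlam,
          mul_nonneg (mul_nonneg hθ.le (sq_nonneg C)) (mul_nonneg hlam.le hx),
          mul_pos hθ hθ, sq_nonneg (C*lam)]
      have hlhs : 0 ≤ 2 * lam * C * b := by positivity
      have hgoal : 2 * lam * C * b < R := lt_of_pow_lt_pow_left₀ 2 hR.le hsq
      simp only [hRdef] at hgoal
      push_cast
      nlinarith [hinner_lb, hgoal]
    | succ n ih =>
      intro t ht
      have hc' : T^[n+1] v₀ = T (T^[n] v₀) := Function.iterate_succ_apply' T n v₀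
      refine gron (T^[n+1] v₀) (n+1) t ht ?_ ?_
      · have h1 : ‖v 0 - T^[n+1] v₀‖ ≤ ((n:ℝ)+1) * ‖v₀ - T v₀‖ := by
          rw [hv₀]
          have := hiter (n+1); push_cast at this; exact this
        have h2 : ‖v 0 - T^[n+1] v₀‖ ^ 2 ≤ (((n:ℝ)+1) * ‖v₀ - T v₀‖) ^ 2 :=
          pow_le_pow_left₀ (norm_nonneg _) h1 2
        rw [hnorm] at h2
        push_cast
        nlinarith [h2]
      · intro x ε hx hε hWB
        set c : H := T^[n+1] v₀
        set u : H := v x - c with hu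
        set b : ℝ := ‖u‖ with hbdef
        have hb : 0 ≤ b := norm_nonneg _
        set g : ℝ := ‖v x - T^[n] v₀‖ with hgdef
        have hg : 0 ≤ g := norm_nonneg _
        have hθ : 0 < ε * Real.exp (2 / lam * x) := by positivity
        have hdecomp : (inner ℝ (v x - T (v x)) u : ℝ)
            = (inner ℝ u u : ℝ) - (inner ℝ (T (v x) - c) u : ℝ) := by
          have hrw : (v x - T (v x) : H) = u - (T (v x) - c) := by
            rw [hu]; abel
          rw [hrw, inner_sub_left]
        have hz : ‖T (v x) - c‖ ≤ g := by
          rw [show c = T (T^[n] v₀) from hc']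
          exact hT _ _
        have hcs : (inner ℝ (T (v x) - c) u : ℝ) ≤ g * b := by
          refine (real_inner_le_norm _ _).trans ?_
          exact mul_le_mul_of_nonneg_right hz hb
        have huu : (inner ℝ u u : ℝ) = b ^ 2 := by
          rw [real_inner_self_eq_norm_sq, hbdef]
        have hW' : lam * (2 * (inner ℝ (-(1 / lam) • (v x - T (v x))) u : ℝ))
            = -2 * (inner ℝ (v x - T (v x)) u : ℝ) := by
          rw [real_inner_smul_left]; field_simp
        have hinner_lb : (inner ℝ (v x - T (v x)) u : ℝ) ≥ b ^ 2 - g * b := by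
          rw [hdecomp, huu]; linarith
        rw [hW']
        have hb2 : b ^ 2 = C ^ 2 * (lam * x + (((n:ℕ)+1 : ℝ) * lam - x) ^ 2)
            + ε * Real.exp (2 / lam * x) := by
          have := hWB; push_cast at this ⊢; linarith [this]
        have hg2 : g ^ 2 ≤ C ^ 2 * (lam * x + ((n:ℝ) * lam - x) ^ 2) := ih x hx
        set θ : ℝ := ε * Real.exp (2 / lam * x) with hθdef
        push_cast
        nlinarith [sq_nonneg (g - b), hθ, hb2, hg2, hinner_lb]
  -- conclude
  intro n t ht
  have h := main n t ht
  have hf0 : 0 ≤ lam * t + ((n:ℝ) * lam - t) ^ 2 := by positivity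
  calc ‖v t - T^[n] v₀‖ = Real.sqrt (‖v t - T^[n] v₀‖ ^ 2) :=
        (Real.sqrt_sq (norm_nonneg _)).symm
    _ ≤ Real.sqrt (C ^ 2 * (lam * t + ((n:ℝ) * lam - t) ^ 2)) := Real.sqrt_le_sqrt h
    _ = C * Real.sqrt (lam * t + ((n:ℝ) * lam - t) ^ 2) := by
        rw [Real.sqrt_mul (sq_nonneg C), Real.sqrt_sq hC]
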